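/- Suppose x = y·u·z is square-free relative to π and belongs to Lin(n), and u ~ v. Then the word y·v·z also belongs to Lin(n). -/

import Mathlib

namespace SqFreePaper

variable {A : Type*}

/-- A word is square-free if it contains no nonempty factor of the form `s ++ s`. -/
def IsSquareFreeWord (w : List A) : Prop :=
  ∀ u s v : List A, w = u ++ s ++ s ++ v → s = []

/-- One-step rewriting relation associated with a system of defining relations `π`. -/
def OneStep (π : List A → List A → Prop) (x y : List A) : Prop :=
  ∃ r s u v : List A, x = r ++ u ++ s ∧ y = r ++ v ++ s ∧ (π u v ∨ π v u)

/-- The congruence `=_π` generated by `π`: reflexive-transitive closure of one-step rewriting. -/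
def EqRel (π : List A → List A → Prop) : List A → List A → Prop :=
  Relation.ReflTransGen (OneStep π)

/-- `w` is square-free relative to `π`: every word in its `=_π`-class is square-free. -/
def SFRel (π : List A → List A → Prop) (w : List A) : Prop :=
  ∀ z, EqRel π w z → IsSquareFreeWord z

/-- Union of two systems of defining relations. -/
def PiRel (σ ρ : List A → List A → Prop) (x y : List A) : Prop := σ x y ∨ ρ x y

/-- The set of defining words of a system `σ`. -/
def DWords (σ : List A → List A → Prop) : Set (List A) :=
  {x | ∃ y, σ x y ∨ σ y x}

/-- The closure of `D_σ` under the congruence `=_ρ`. -/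
def ClosureD (σ ρ : List A → List A → Prop) : Set (List A) :=
  {x | ∃ w ∈ DWords σ, EqRel ρ w x}

/-- The system `{(u_i, u_j) : i < j}` determined by a finite family of words. -/
def FamilyRel {n : ℕ} (u : Fin n → List A) (x y : List A) : Prop :=
  ∃ i j : Fin n, i < j ∧ x = u i ∧ y = u j

/-- `x ~ y` iff both lie in `D̄_σ` or both lie in `D̄_ρ`. -/
def Sim (σ ρ : List A → List A → Prop) (x y : List A) : Prop :=
  (x ∈ ClosureD σ ρ ∧ y ∈ ClosureD σ ρ) ∨ (x ∈ ClosureD ρ σ ∧ y ∈ ClosureD ρ σ)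

/-- `D_τ = D̄_σ ∪ D̄_ρ`. -/
def DTau (σ ρ : List A → List A → Prop) : Set (List A) :=
  ClosureD σ ρ ∪ ClosureD ρ σ

/-- The concatenation `x_a ++ x_{a+1} ++ ⋯ ++ x_{a+len-1}`. -/
def wordSeg (x : ℕ → List A) (a len : ℕ) : List A :=
  ((List.range' a len).map x).flatten

/-- Standing hypotheses of the paper: `D̄_σ`, `D̄_ρ` are finite, nonempty, disjoint,
and closed under `=_σ`, `=_ρ` respectively. -/
def SettingHyps (σ ρ : List A → List A → Prop) : Prop :=
  (ClosureD σ ρ).Finite ∧ (ClosureD ρ σ).Finite ∧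
  (ClosureD σ ρ).Nonempty ∧ (ClosureD ρ σ).Nonempty ∧
  (ClosureD σ ρ ∩ ClosureD ρ σ = ∅) ∧
  (∀ x ∈ ClosureD σ ρ, ∀ y, EqRel σ x y → y ∈ ClosureD σ ρ) ∧
  (∀ x ∈ ClosureD ρ σ, ∀ y, EqRel ρ x y → y ∈ ClosureD ρ σ)

/-- `x_1, …, x_n` (with complementary members `p_i`, `q_i`) is a linear decomposition. -/
def IsLinDecomp (σ ρ : List A → List A → Prop) (n : ℕ) (x p q : ℕ → List A) : Prop :=
  1 ≤ n ∧
  (∀ i, 1 ≤ i → i ≤ n → x i ≠ []) ∧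
  (∃ u v : ℕ → List A,
    (∀ i, 1 < i → i ≤ n → Sim σ ρ (p i ++ x i ++ q i) (q (i-1) ++ u i)) ∧
    (∀ i, 1 ≤ i → i < n → Sim σ ρ (p i ++ x i ++ q i) (v i ++ p (i+1)))) ∧
  (∀ i, 1 ≤ i → i < n → q i = [] ∨ p (i+1) = []) ∧
  p 1 = [] ∧ q n = [] ∧ (n = 1 → x 1 ∈ DTau σ ρ)

/-- `Lin(n)`: words with a linear decomposition of at most `n` members. -/
def LinSet (σ ρ : List A → List A → Prop) (n : ℕ) : Set (List A) :=
  {w | ∃ m, 1 ≤ m ∧ m ≤ n ∧ ∃ x p q, IsLinDecomp σ ρ m x p q ∧ w = wordSeg x 1 m}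

/-- `Lin = ⋃ₙ Lin(n)`: linearly decomposable words. -/
def LinAll (σ ρ : List A → List A → Prop) : Set (List A) :=
  {w | ∃ n, w ∈ LinSet σ ρ n}

/-- Occurrence `(r, d, s)` contains occurrence `(p, e, q)` (of the same word)
iff `|r| ≤ |p|` and `|s| ≤ |q|`. -/
def Contained (p q r s : List A) : Prop := r.length ≤ p.length ∧ s.length ≤ q.length

/-- Two occurrences in `w` overlap iff some occurrence of a nonempty word is
contained in both. -/
def Overlap (w p q r s : List A) : Prop :=
  ∃ a f b : List A, f ≠ [] ∧ w = a ++ f ++ b ∧ Contained a b p q ∧ Contained a b r s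

/-- `(p, e, q)` is a maximal occurrence in `w` of a word `e` in the set `L`. -/
def MaximalOcc (L : Set (List A)) (w p e q : List A) : Prop :=
  w = p ++ e ++ q ∧ e ∈ L ∧
  ∀ r d s, w = r ++ d ++ s → d ∈ L → Contained p q r s → r = p ∧ d = e ∧ s = q

section Basics

variable {π σ ρ : List A → List A → Prop}

lemma eqrel_refl (w : List A) : EqRel π w w := Relation.ReflTransGen.refl

lemma eqrel_trans {a b c : List A} (h1 : EqRel π a b) (h2 : EqRel π b c) : EqRel π a c :=
  Relation.ReflTransGen.trans h1 h2

lemma onestep_symm {a b : List A} (h : OneStep π a b) : OneStep π b a := by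
  obtain ⟨r, s, u, v, h1, h2, h3⟩ := h
  exact ⟨r, s, v, u, h2, h1, h3.symm⟩

lemma eqrel_symm {a b : List A} (h : EqRel π a b) : EqRel π b a :=
  haveI : Std.Symm (OneStep π) := ⟨fun _ _ => onestep_symm⟩
  (Relation.ReflTransGen.stdSymm (r := OneStep π)).symm _ _ h

lemma onestep_context {a b : List A} (r s : List A) (h : OneStep π a b) :
    OneStep π (r ++ a ++ s) (r ++ b ++ s) := by
  obtain ⟨r', s', u, v, h1, h2, h3⟩ := h
  exact ⟨r ++ r', s' ++ s, u, v, by simp [h1], by simp [h2], h3⟩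

lemma eqrel_context {a b : List A} (r s : List A) (h : EqRel π a b) :
    EqRel π (r ++ a ++ s) (r ++ b ++ s) := by
  induction h with
  | refl => exact eqrel_refl _
  | tail _ h2 ih => exact ih.tail (onestep_context r s h2)

lemma eqrel_congr {a b X Y : List A} (r s : List A) (h : EqRel π a b)
    (hX : X = r ++ a ++ s) (hY : Y = r ++ b ++ s) : EqRel π X Y := by
  subst hX; subst hY; exact eqrel_context r s h

lemma eqrel_mono_left {a b : List A} (h : EqRel σ a b) : EqRel (PiRel σ ρ) a b := by
  induction h with
  | refl => exact eqrel_refl _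
  | tail _ h2 ih =>
      obtain ⟨r, s, u, v, h1, h2', h3⟩ := h2
      exact ih.tail ⟨r, s, u, v, h1, h2', h3.imp Or.inl Or.inl⟩

lemma eqrel_mono_right {a b : List A} (h : EqRel ρ a b) : EqRel (PiRel σ ρ) a b := by
  induction h with
  | refl => exact eqrel_refl _
  | tail _ h2 ih =>
      obtain ⟨r, s, u, v, h1, h2', h3⟩ := h2
      exact ih.tail ⟨r, s, u, v, h1, h2', h3.imp Or.inr Or.inr⟩

/-- the closure `D̄_σ` is closed under ρ-equivalence by definition. -/
lemma closureD_rho_closed {a b : List A} (ha : a ∈ ClosureD σ ρ) (h : EqRel ρ a b) :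
    b ∈ ClosureD σ ρ := by
  obtain ⟨d, hd, hda⟩ := ha
  exact ⟨d, hd, hda.trans h⟩

lemma onestep_cases {a b : List A} (h : OneStep (PiRel σ ρ) a b) :
    OneStep σ a b ∨ OneStep ρ a b := by
  obtain ⟨r, s, u, v, h1, h2, h3⟩ := h
  rcases h3 with (h3 | h3) | (h3 | h3)
  · exact Or.inl ⟨r, s, u, v, h1, h2, Or.inl h3⟩
  · exact Or.inr ⟨r, s, u, v, h1, h2, Or.inl h3⟩
  · exact Or.inl ⟨r, s, u, v, h1, h2, Or.inr h3⟩
  · exact Or.inr ⟨r, s, u, v, h1, h2, Or.inr h3⟩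

lemma closureD_sigma_pi_closed (hset : SettingHyps σ ρ) {a b : List A}
    (ha : a ∈ ClosureD σ ρ) (h : EqRel (PiRel σ ρ) a b) : b ∈ ClosureD σ ρ := by
  induction h with
  | refl => exact ha
  | tail _ h2 ih =>
      rcases onestep_cases h2 with h3 | h3
      · exact hset.2.2.2.2.2.1 _ ih _ (Relation.ReflTransGen.single h3)
      · exact closureD_rho_closed ih (Relation.ReflTransGen.single h3)

lemma closureD_rho_pi_closed (hset : SettingHyps σ ρ) {a b : List A}
    (ha : a ∈ ClosureD ρ σ) (h : EqRel (PiRel σ ρ) a b) : b ∈ ClosureD ρ σ := by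
  induction h with
  | refl => exact ha
  | tail _ h2 ih =>
      rcases onestep_cases h2 with h3 | h3
      · exact closureD_rho_closed ih (Relation.ReflTransGen.single h3)
      · exact hset.2.2.2.2.2.2 _ ih _ (Relation.ReflTransGen.single h3)

lemma dwords_family {nu : ℕ} {u : Fin nu → List A} {d : List A}
    (hd : d ∈ DWords (FamilyRel u)) : ∃ i, d = u i := by
  obtain ⟨y, hy | hy⟩ := hd
  · obtain ⟨i, j, _, h1, _⟩ := hy; exact ⟨i, h1⟩
  · obtain ⟨i, j, _, _, h2⟩ := hy; exact ⟨j, h2⟩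

lemma family_eqrel {nu : ℕ} {u : Fin nu → List A} {d d' : List A}
    (hd : d ∈ DWords (FamilyRel u)) (hd' : d' ∈ DWords (FamilyRel u)) :
    EqRel (FamilyRel u) d d' := by
  obtain ⟨i, rfl⟩ := dwords_family hd
  obtain ⟨j, rfl⟩ := dwords_family hd'
  rcases lt_trichotomy i j with h | h | h
  · exact Relation.ReflTransGen.single ⟨[], [], u i, u j, by simp, by simp, Or.inl ⟨i, j, h, rfl, rfl⟩⟩
  · subst h; exact eqrel_refl _
  · exact Relation.ReflTransGen.single ⟨[], [], u i, u j, by simp, by simp, Or.inr ⟨j, i, h, rfl, rfl⟩⟩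

end Basics


section SimLemmas

variable {σ ρ : List A → List A → Prop}

lemma sim_conn {nu nv : ℕ} {u : Fin nu → List A} {v : Fin nv → List A}
    (hσ : σ = FamilyRel u) (hρ : ρ = FamilyRel v) {a b : List A}
    (h : Sim σ ρ a b) : EqRel (PiRel σ ρ) a b := by
  rcases h with ⟨⟨d, hd, hda⟩, ⟨d', hd', hd'b⟩⟩ | ⟨⟨d, hd, hda⟩, ⟨d', hd', hd'b⟩⟩
  · refine eqrel_trans (eqrel_symm (eqrel_mono_right hda))
      (eqrel_trans ?_ (eqrel_mono_right hd'b))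
    exact eqrel_mono_left (by rw [hσ] at hd hd' ⊢; exact family_eqrel hd hd')
  · refine eqrel_trans (eqrel_symm (eqrel_mono_left hda))
      (eqrel_trans ?_ (eqrel_mono_left hd'b))
    exact eqrel_mono_right (by rw [hρ] at hd hd' ⊢; exact family_eqrel hd hd')

lemma sim_symm {a b : List A} (h : Sim σ ρ a b) : Sim σ ρ b a := by
  rcases h with ⟨h1, h2⟩ | ⟨h1, h2⟩
  · exact Or.inl ⟨h2, h1⟩
  · exact Or.inr ⟨h2, h1⟩

lemma sim_self_left {a b : List A} (h : Sim σ ρ a b) : Sim σ ρ a a := by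
  rcases h with ⟨h1, _⟩ | ⟨h1, _⟩
  · exact Or.inl ⟨h1, h1⟩
  · exact Or.inr ⟨h1, h1⟩

lemma sim_right_congr (hset : SettingHyps σ ρ) {a b b' : List A}
    (h : Sim σ ρ a b) (h2 : EqRel (PiRel σ ρ) b b') : Sim σ ρ a b' := by
  rcases h with ⟨h1, hb⟩ | ⟨h1, hb⟩
  · exact Or.inl ⟨h1, closureD_sigma_pi_closed hset hb h2⟩
  · exact Or.inr ⟨h1, closureD_rho_pi_closed hset hb h2⟩

lemma sim_left_congr (hset : SettingHyps σ ρ) {a a' b : List A}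
    (h : Sim σ ρ a b) (h2 : EqRel (PiRel σ ρ) a a') : Sim σ ρ a' b := by
  exact sim_symm (sim_right_congr hset (sim_symm h) h2)

lemma sim_trans (hset : SettingHyps σ ρ) {a b c : List A}
    (h1 : Sim σ ρ a b) (h2 : Sim σ ρ a c) : Sim σ ρ b c := by
  have hdisj := hset.2.2.2.2.1
  rcases h1 with ⟨ha, hb⟩ | ⟨ha, hb⟩ <;> rcases h2 with ⟨ha', hc⟩ | ⟨ha', hc⟩
  · exact Or.inl ⟨hb, hc⟩
  · exact absurd (Set.mem_inter ha ha') (by rw [hdisj]; exact Set.notMem_empty a)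
  · exact absurd (Set.mem_inter ha' ha) (by rw [hdisj]; exact Set.notMem_empty a)
  · exact Or.inr ⟨hb, hc⟩

/-- from two words being class-members, one of three relations holds. -/
lemma sim_three {a b c : List A} (ha : Sim σ ρ a a) (hb : Sim σ ρ b b) (hc : Sim σ ρ c c) :
    Sim σ ρ a c ∨ Sim σ ρ b c ∨ Sim σ ρ a b := by
  rcases ha with ⟨h1, _⟩ | ⟨h1, _⟩ <;> rcases hb with ⟨h2, _⟩ | ⟨h2, _⟩ <;>
    rcases hc with ⟨h3, _⟩ | ⟨h3, _⟩
  · exact Or.inl (Or.inl ⟨h1, h3⟩)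
  · exact Or.inr (Or.inr (Or.inl ⟨h1, h2⟩))
  · exact Or.inl (Or.inl ⟨h1, h3⟩)
  · exact Or.inr (Or.inl (Or.inr ⟨h2, h3⟩))
  · exact Or.inr (Or.inl (Or.inl ⟨h2, h3⟩))
  · exact Or.inl (Or.inr ⟨h1, h3⟩)
  · exact Or.inr (Or.inr (Or.inr ⟨h1, h2⟩))
  · exact Or.inl (Or.inr ⟨h1, h3⟩)

lemma no_square {π : List A → List A → Prop} {X X' : List A} (hsf : SFRel π X)
    (h : EqRel π X X') (r s t : List A) (e : X' = r ++ s ++ s ++ t) (hs : s ≠ []) : False :=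
  hs (hsf X' h r s t e)

end SimLemmas

section WordSegLemmas

variable {x x' : ℕ → List A}

@[simp] lemma wordSeg_zero (a : ℕ) : wordSeg x a 0 = [] := rfl

lemma wordSeg_succ_left (a l : ℕ) : wordSeg x a (l+1) = x a ++ wordSeg x (a+1) l := by
  simp [wordSeg, List.range'_succ]

@[simp] lemma wordSeg_one (a : ℕ) : wordSeg x a 1 = x a := by
  simp [wordSeg_succ_left]

lemma wordSeg_append (a l₁ l₂ : ℕ) :
    wordSeg x a (l₁ + l₂) = wordSeg x a l₁ ++ wordSeg x (a + l₁) l₂ := by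
  unfold wordSeg
  rw [← List.flatten_append, ← List.map_append]
  congr 1
  rw [show a + l₁ = a + 1 * l₁ by ring, List.range'_append]

lemma wordSeg_succ_right (a l : ℕ) : wordSeg x a (l+1) = wordSeg x a l ++ x (a + l) := by
  rw [wordSeg_append a l 1, wordSeg_one]

lemma wordSeg_congr {a a' : ℕ} (l : ℕ) (h : ∀ k, k < l → x (a + k) = x' (a' + k)) :
    wordSeg x a l = wordSeg x' a' l := by
  induction l with
  | zero => rfl
  | succ n ih =>
      rw [wordSeg_succ_right, wordSeg_succ_right, ih (fun k hk => h k (by omega)),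
        h n (by omega)]

end WordSegLemmas


section Decomp

variable {σ ρ : List A → List A → Prop} {m : ℕ} {x p q uu vv : ℕ → List A}

/-- POST: the word after block k can be rewritten to start with `q k`. -/
lemma post_lemma
    (hconn : ∀ a b : List A, Sim σ ρ a b → EqRel (PiRel σ ρ) a b)
    (hc : ∀ i, 1 < i → i ≤ m → Sim σ ρ (p i ++ x i ++ q i) (q (i-1) ++ uu i))
    (hd : ∀ i, 1 ≤ i → i < m → q i = [] ∨ p (i+1) = [])
    (hqm : q m = []) :
    ∀ k, 1 ≤ k → k ≤ m → ∃ s, EqRel (PiRel σ ρ) (wordSeg x (k+1) (m-k)) (q k ++ s) := by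
  have main : ∀ d k, 1 ≤ k → k + d = m →
      ∃ s, EqRel (PiRel σ ρ) (wordSeg x (k+1) (m-k)) (q k ++ s) := by
    intro d
    induction d with
    | zero =>
        intro k hk1 hkm
        refine ⟨[], ?_⟩
        have : k = m := by omega
        subst this
        simp [hqm, Nat.sub_self]
        exact eqrel_refl _
    | succ n ih =>
        intro k hk1 hkm
        by_cases hq : q k = []
        · exact ⟨wordSeg x (k+1) (m-k), by rw [hq]; simpa using eqrel_refl _⟩
        · have hp : p (k+1) = [] := (hd k hk1 (by omega)).resolve_left hq
          obtain ⟨s', h'⟩ := ih (k+1) (by omega) (by omega)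
          have e1 : wordSeg x (k+1) (m-k) = x (k+1) ++ wordSeg x (k+2) (m-(k+1)) := by
            rw [show m - k = (m - (k+1)) + 1 by omega, wordSeg_succ_left]
          have step1 : EqRel (PiRel σ ρ) (wordSeg x (k+1) (m-k))
              (x (k+1) ++ (q (k+1) ++ s')) := by
            refine eqrel_congr (x (k+1)) [] h' (by simp [e1]) (by simp)
          have hsim := hc (k+1) (by omega) (by omega)
          have hstep : EqRel (PiRel σ ρ) (p (k+1) ++ x (k+1) ++ q (k+1))
              (q (k+1-1) ++ uu (k+1)) := hconn _ _ hsim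
          refine ⟨uu (k+1) ++ s', step1.trans (eqrel_congr [] s' hstep ?_ ?_)⟩
          · simp [hp]
          · simp [show k + 1 - 1 = k by omega]
  intro k hk1 hkm
  exact main (m - k) k hk1 (by omega)

/-- PRE: the word before block k can be rewritten to end with `p k`. -/
lemma pre_lemma
    (hconn : ∀ a b : List A, Sim σ ρ a b → EqRel (PiRel σ ρ) a b)
    (hv : ∀ i, 1 ≤ i → i < m → Sim σ ρ (p i ++ x i ++ q i) (vv i ++ p (i+1)))
    (hd : ∀ i, 1 ≤ i → i < m → q i = [] ∨ p (i+1) = [])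
    (hp1 : p 1 = []) :
    ∀ k, 1 ≤ k → k ≤ m → ∃ w, EqRel (PiRel σ ρ) (wordSeg x 1 (k-1)) (w ++ p k) := by
  intro k
  induction k with
  | zero => omega
  | succ n ih =>
      intro _ hkm
      rcases Nat.eq_or_lt_of_le (show 1 ≤ n + 1 by omega) with h1 | h1
      · refine ⟨[], ?_⟩
        rw [← h1]
        simpa [hp1] using eqrel_refl ([] : List A)
      · have hn1 : 1 ≤ n := by omega
        by_cases hp : p (n+1) = []
        · exact ⟨wordSeg x 1 n, by rw [hp]; simpa using eqrel_refl _⟩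
        · have hq : q n = [] := (hd n hn1 (by omega)).resolve_right hp
          obtain ⟨w', h'⟩ := ih hn1 (by omega)
          have e1 : wordSeg x 1 n = wordSeg x 1 (n-1) ++ x n := by
            have h2 := wordSeg_succ_right (x := x) 1 (n-1)
            rw [show (n-1)+1 = n by omega, show 1 + (n-1) = n by omega] at h2
            exact h2
          have step1 : EqRel (PiRel σ ρ) (wordSeg x 1 ((n+1)-1)) ((w' ++ p n) ++ x n) := by
            refine eqrel_congr [] (x n) h' (by simp only [Nat.add_sub_cancel]; simp [e1]) (by simp)
          have hstep : EqRel (PiRel σ ρ) (p n ++ x n ++ q n)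
              (vv n ++ p (n+1)) := hconn _ _ (hv n hn1 (by omega))
          refine ⟨w' ++ vv n, step1.trans (eqrel_congr w' [] hstep ?_ ?_)⟩
          · simp [hq]
          · simp
  
/-- chain rewriting a segment to start with `q s`. -/
lemma segL_lemma
    (hconn : ∀ a b : List A, Sim σ ρ a b → EqRel (PiRel σ ρ) a b)
    (hc : ∀ i, 1 < i → i ≤ m → Sim σ ρ (p i ++ x i ++ q i) (q (i-1) ++ uu i)) :
    ∀ d s, 1 ≤ s → s + d ≤ m → q (s + d) = [] → (∀ k, s + 1 ≤ k → k ≤ s + d → p k = []) →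
    ∃ t, EqRel (PiRel σ ρ) (wordSeg x (s+1) d) (q s ++ t) := by
  intro d
  induction d with
  | zero =>
      intro s _ _ hq _
      refine ⟨[], ?_⟩
      simp only [Nat.add_zero] at hq
      simp only [wordSeg_zero, hq, List.append_nil]
      exact eqrel_refl _
  | succ n ih =>
      intro s hs1 hsm hq hp
      obtain ⟨t', h'⟩ := ih (s+1) (by omega) (by omega)
        (by rw [show s + 1 + n = s + (n+1) by omega]; exact hq)
        (fun k hk1 hk2 => hp k (by omega) (by omega))
      have hps1 : p (s+1) = [] := hp (s+1) (by omega) (by omega)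
      have step1 : EqRel (PiRel σ ρ) (wordSeg x (s+1) (n+1))
          (x (s+1) ++ (q (s+1) ++ t')) := by
        refine eqrel_congr (x (s+1)) [] h' (by simp [wordSeg_succ_left]) (by simp)
      have hstep : EqRel (PiRel σ ρ) (p (s+1) ++ x (s+1) ++ q (s+1))
          (q s ++ uu (s+1)) := by
        have := hconn _ _ (hc (s+1) (by omega) (by omega))
        simpa [show s + 1 - 1 = s by omega] using this
      refine ⟨uu (s+1) ++ t', step1.trans (eqrel_congr [] t' hstep ?_ ?_)⟩
      · simp [hps1]
      · simp

/-- chain rewriting a segment to end with `p e`. -/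
lemma segR_lemma
    (hconn : ∀ a b : List A, Sim σ ρ a b → EqRel (PiRel σ ρ) a b)
    (hv : ∀ i, 1 ≤ i → i < m → Sim σ ρ (p i ++ x i ++ q i) (vv i ++ p (i+1))) :
    ∀ d j, 1 ≤ j → j + d ≤ m → p j = [] → (∀ k, j ≤ k → k < j + d → q k = []) →
    ∃ t, EqRel (PiRel σ ρ) (wordSeg x j d) (t ++ p (j + d)) := by
  intro d
  induction d with
  | zero =>
      intro j _ _ hp _
      exact ⟨[], by simpa [hp] using eqrel_refl ([] : List A)⟩
  | succ n ih =>
      intro j hj1 hjm hp hq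
      obtain ⟨t', h'⟩ := ih j hj1 (by omega) hp (fun k hk1 hk2 => hq k hk1 (by omega))
      have hqn : q (j + n) = [] := hq (j+n) (by omega) (by omega)
      have step1 : EqRel (PiRel σ ρ) (wordSeg x j (n+1))
          ((t' ++ p (j+n)) ++ x (j+n)) := by
        refine eqrel_congr [] (x (j+n)) h' (by simp [wordSeg_succ_right]) (by simp)
      have hstep : EqRel (PiRel σ ρ) (p (j+n) ++ x (j+n) ++ q (j+n))
          (vv (j+n) ++ p (j+n+1)) := hconn _ _ (hv (j+n) (by omega) (by omega))
      refine ⟨t' ++ vv (j+n), step1.trans (eqrel_congr t' [] hstep ?_ ?_)⟩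
      · simp [hqn]
      · simp [show j + (n+1) = j + n + 1 by omega]

lemma groundL_lemma
    (hd : ∀ i, 1 ≤ i → i < m → q i = [] ∨ p (i+1) = []) :
    ∀ d s, 1 ≤ s → s + d < m →
      (∀ k, s ≤ k → k ≤ s + d → q k ≠ []) ∨
      (∃ j, s ≤ j ∧ j ≤ s + d ∧ q j = [] ∧ ∀ k, s < k → k ≤ j → p k = []) := by
  intro d
  induction d with
  | zero =>
      intro s hs1 hsm
      by_cases hq : q s = []
      · exact Or.inr ⟨s, le_refl _, by omega, hq, fun k h1 h2 => by omega⟩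
      · exact Or.inl (fun k h1 h2 => by rw [show k = s by omega]; exact hq)
  | succ n ih =>
      intro s hs1 hsm
      by_cases hq : q s = []
      · exact Or.inr ⟨s, le_refl _, by omega, hq, fun k h1 h2 => by omega⟩
      · rcases ih (s+1) (by omega) (by omega) with h | ⟨j, h1, h2, h3, h4⟩
        · refine Or.inl (fun k hk1 hk2 => ?_)
          rcases Nat.eq_or_lt_of_le hk1 with h' | h'
          · rw [← h']; exact hq
          · exact h k (by omega) (by omega)
        · refine Or.inr ⟨j, by omega, by omega, h3, fun k hk1 hk2 => ?_⟩
          rcases Nat.eq_or_lt_of_le (show s + 1 ≤ k by omega) with h' | h'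
          · rw [← h']; exact (hd s hs1 (by omega)).resolve_left hq
          · exact h4 k (by omega) hk2

lemma groundR_lemma
    (hd : ∀ i, 1 ≤ i → i < m → q i = [] ∨ p (i+1) = []) :
    ∀ d s, 1 ≤ s → s + d ≤ m →
      (∀ k, s ≤ k → k ≤ s + d → p k ≠ []) ∨
      (∃ j, s ≤ j ∧ j ≤ s + d ∧ p j = [] ∧ ∀ k, j ≤ k → k < s + d → q k = []) := by
  intro d
  induction d with
  | zero =>
      intro s hs1 hsm
      by_cases hp : p s = []
      · exact Or.inr ⟨s, le_refl _, by omega, hp, fun k h1 h2 => by omega⟩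
      · exact Or.inl (fun k h1 h2 => by rw [show k = s by omega]; exact hp)
  | succ n ih =>
      intro s hs1 hsm
      by_cases hp : p (s + (n+1)) = []
      · exact Or.inr ⟨s + (n+1), by omega, le_refl _, hp, fun k h1 h2 => by omega⟩
      · rcases ih s hs1 (by omega) with h | ⟨j, h1, h2, h3, h4⟩
        · refine Or.inl (fun k hk1 hk2 => ?_)
          rcases Nat.eq_or_lt_of_le hk2 with h' | h'
          · rw [h']; exact hp
          · exact h k hk1 (by omega)
        · refine Or.inr ⟨j, h1, by omega, h3, fun k hk1 hk2 => ?_⟩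
          rcases Nat.eq_or_lt_of_le (show k ≤ s + n by omega) with h' | h'
          · rw [h']
            have hp' : ¬ p (s+n+1) = [] := by
              rw [show s+n+1 = s+(n+1) by omega]; exact hp
            exact (hd (s+n) (by omega) (by omega)).resolve_right hp'
          · exact h4 k hk1 (by omega)

end Decomp

section Locate

variable {x : ℕ → List A}

lemma startSplit :
    ∀ (l s : ℕ) (y w : List A), wordSeg x s l = y ++ w → w ≠ [] →
    (∀ i, s ≤ i → i < s + l → x i ≠ []) →
    ∃ a α β', s ≤ a ∧ a < s + l ∧ y = wordSeg x s (a - s) ++ α ∧ x a = α ++ β' ∧ β' ≠ [] ∧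
      w = β' ++ wordSeg x (a+1) (s + l - (a+1)) := by
  intro l
  induction l with
  | zero =>
      intro s y w h hw _
      simp only [wordSeg_zero] at h
      exact absurd (List.append_eq_nil_iff.mp h.symm).2 hw
  | succ n ih =>
      intro s y w h hw hne
      rw [wordSeg_succ_left] at h
      have hcase : (∃ a', y = x s ++ a' ∧ wordSeg x (s+1) n = a' ++ w) ∨
          (∃ c', x s = y ++ c' ∧ w = c' ++ wordSeg x (s+1) n) := by
        rcases List.append_eq_append_iff.mp h with ⟨a', h1, h2⟩ | ⟨c', h1, h2⟩
        · exact Or.inl ⟨a', h1, h2⟩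
        · exact Or.inr ⟨c', h1, h2⟩
      rcases hcase with ⟨a', h1, h2⟩ | ⟨c', h1, h2⟩
      · obtain ⟨a, α, β', g1, g2, g3, g4, g5, g6⟩ :=
          ih (s+1) a' w h2 hw (fun i hi1 hi2 => hne i (by omega) (by omega))
        refine ⟨a, α, β', by omega, by omega, ?_, g4, g5, ?_⟩
        · rw [h1, g3, show a - s = (a - (s+1)) + 1 by omega, wordSeg_succ_left]
          simp
        · rw [g6, show s + 1 + n - (a+1) = s + (n+1) - (a+1) by omega]
      · by_cases hc : c' = []
        · subst hc
          have hy : y = x s := by simpa using h1.symm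
          obtain ⟨a, α, β', g1, g2, g3, g4, g5, g6⟩ :=
            ih (s+1) [] w (by simpa using h2.symm) hw
              (fun i hi1 hi2 => hne i (by omega) (by omega))
          have hα : wordSeg x (s+1) (a - (s+1)) = [] ∧ α = [] :=
            List.append_eq_nil_iff.mp g3.symm
          have ha : a = s + 1 := by
            by_contra hno
            have hx1 : wordSeg x (s+1) (a - (s+1)) ≠ [] := by
              rw [show a - (s+1) = (a - (s+1) - 1) + 1 by omega, wordSeg_succ_left]
              simp [hne (s+1) (by omega) (by omega)]
            exact hx1 hα.1
          refine ⟨a, α, β', by omega, by omega, ?_, g4, g5, ?_⟩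
          · rw [hy, hα.2, ha]
            simp
          · rw [g6, show s + 1 + n - (a+1) = s + (n+1) - (a+1) by omega]
        · refine ⟨s, y, c', le_refl _, by omega, by simp, h1, hc, ?_⟩
          rw [h2, show s + (n+1) - (s+1) = n by omega]
  
lemma endSplit :
    ∀ (l s : ℕ) (w z : List A), wordSeg x s l = w ++ z → w ≠ [] →
    (∀ i, s ≤ i → i < s + l → x i ≠ []) →
    ∃ b γ δ, s ≤ b ∧ b < s + l ∧ w = wordSeg x s (b - s) ++ γ ∧ x b = γ ++ δ ∧ γ ≠ [] ∧
      z = δ ++ wordSeg x (b+1) (s + l - (b+1)) := by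
  intro l
  induction l with
  | zero =>
      intro s w z h hw _
      simp only [wordSeg_zero] at h
      exact absurd (List.append_eq_nil_iff.mp h.symm).1 hw
  | succ n ih =>
      intro s w z h hw hne
      rw [wordSeg_succ_left] at h
      have hcase : (∃ a', w = x s ++ a' ∧ wordSeg x (s+1) n = a' ++ z) ∨
          (∃ c', x s = w ++ c' ∧ z = c' ++ wordSeg x (s+1) n) := by
        rcases List.append_eq_append_iff.mp h with ⟨a', h1, h2⟩ | ⟨c', h1, h2⟩
        · exact Or.inl ⟨a', h1, h2⟩
        · exact Or.inr ⟨c', h1, h2⟩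
      rcases hcase with ⟨a', h1, h2⟩ | ⟨c', h1, h2⟩
      · by_cases ha : a' = []
        · subst ha
          refine ⟨s, x s, [], le_refl _, by omega, by simpa using h1, by simp,
            hne s (le_refl _) (by omega), ?_⟩
          rw [show s + (n+1) - (s+1) = n by omega]
          simpa using h2.symm
        · obtain ⟨b, γ, δ, g1, g2, g3, g4, g5, g6⟩ := ih (s+1) a' z h2 ha
            (fun i hi1 hi2 => hne i (by omega) (by omega))
          refine ⟨b, γ, δ, by omega, by omega, ?_, g4, g5, ?_⟩
          · rw [h1, g3, show b - s = (b - (s+1)) + 1 by omega, wordSeg_succ_left]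
            simp
          · rw [g6, show s + 1 + n - (b+1) = s + (n+1) - (b+1) by omega]
      · refine ⟨s, w, c', le_refl _, by omega, by simp, h1, hw, ?_⟩
        rw [h2, show s + (n+1) - (s+1) = n by omega]

end Locate

section Contradictions

variable {σ ρ : List A → List A → Prop}

lemma wordSeg_split3 {x : ℕ → List A} {k m : ℕ} (h1 : 1 ≤ k) (h2 : k ≤ m) :
    wordSeg x 1 m = wordSeg x 1 (k-1) ++ x k ++ wordSeg x (k+1) (m-k) := by
  have t1 := wordSeg_append (x := x) 1 (k-1) (1 + (m-k))
  rw [show (k-1)+(1+(m-k)) = m by omega, show 1 + (k-1) = k by omega] at t1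
  have t2 := wordSeg_append (x := x) k 1 (m-k)
  rw [wordSeg_one] at t2
  rw [t1, t2]
  simp [List.append_assoc]

lemma wordSeg_split_adj {x : ℕ → List A} {k m : ℕ} (h1 : 1 ≤ k) (h2 : k + 1 ≤ m) :
    wordSeg x 1 m = wordSeg x 1 (k-1) ++ x k ++ x (k+1) ++ wordSeg x (k+2) (m-(k+1)) := by
  rw [wordSeg_split3 h1 (by omega : k ≤ m),
    show m - k = (m - (k+1)) + 1 by omega, wordSeg_succ_left]
  simp [List.append_assoc, show k+1+1 = k+2 by omega]

/-- the word as `pre ++ α ++ u' ++ δ ++ post` for a multi-block occurrence. -/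
lemma exposeU {x : ℕ → List A} {m a b : ℕ} {α β γ δ u' : List A}
    (ha1 : 1 ≤ a) (hab : a < b) (hbm : b ≤ m)
    (hxa : x a = α ++ β) (hxb : x b = γ ++ δ)
    (hu' : u' = β ++ wordSeg x (a+1) (b-1-a) ++ γ) :
    wordSeg x 1 m =
      wordSeg x 1 (a-1) ++ α ++ u' ++ (δ ++ wordSeg x (b+1) (m-b)) := by
  rw [wordSeg_split3 ha1 (by omega : a ≤ m), hxa, hu']
  have e1 : wordSeg x (a+1) (m-a)
      = wordSeg x (a+1) (b-1-a) ++ x b ++ wordSeg x (b+1) (m-b) := by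
    have t1 := wordSeg_append (x := x) (a+1) (b-1-a) (1 + (m-b))
    rw [show (b-1-a)+(1+(m-b)) = m - a by omega, show a+1+(b-1-a) = b by omega] at t1
    have t2 := wordSeg_append (x := x) b 1 (m-b)
    rw [wordSeg_one] at t2
    rw [t1, t2]
    simp [List.append_assoc]
  rw [e1, hxb]
  simp [List.append_assoc]

/-- star-left contradiction: `u'` in the class of `w_a`, with `α ≠ []`. -/
lemma starL {m a b : ℕ} {x p q vv : ℕ → List A} {α β γ δ u' : List A}
    (hconn : ∀ w w' : List A, Sim σ ρ w w' → EqRel (PiRel σ ρ) w w')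
    (hv : ∀ i, 1 ≤ i → i < m → Sim σ ρ (p i ++ x i ++ q i) (vv i ++ p (i+1)))
    (hd : ∀ i, 1 ≤ i → i < m → q i = [] ∨ p (i+1) = [])
    (hp1 : p 1 = [])
    (hsf : SFRel (PiRel σ ρ) (wordSeg x 1 m))
    (ha1 : 1 ≤ a) (hab : a < b) (hbm : b ≤ m)
    (hxa : x a = α ++ β) (hxb : x b = γ ++ δ)
    (hu' : u' = β ++ wordSeg x (a+1) (b-1-a) ++ γ)
    (hUWa : Sim σ ρ u' (p a ++ x a ++ q a)) (hα : α ≠ []) : False := by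
  obtain ⟨w₁, hpre⟩ := pre_lemma hconn hv hd hp1 a ha1 (by omega)
  have hstep1 : EqRel (PiRel σ ρ) (wordSeg x 1 m)
      ((w₁ ++ p a) ++ (α ++ u' ++ (δ ++ wordSeg x (b+1) (m-b)))) := by
    refine eqrel_congr [] (α ++ u' ++ (δ ++ wordSeg x (b+1) (m-b))) hpre ?_ ?_
    · rw [exposeU ha1 hab hbm hxa hxb hu']; simp [List.append_assoc]
    · simp [List.append_assoc]
  have hstep2 : EqRel (PiRel σ ρ) (wordSeg x 1 m)
      ((w₁ ++ p a ++ α) ++ (p a ++ x a ++ q a) ++ (δ ++ wordSeg x (b+1) (m-b))) := by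
    refine hstep1.trans (eqrel_congr (w₁ ++ p a ++ α) (δ ++ wordSeg x (b+1) (m-b))
      (hconn _ _ hUWa) (by simp [List.append_assoc]) (by simp [List.append_assoc]))
  refine no_square hsf hstep2 w₁ (p a ++ α)
    (β ++ q a ++ (δ ++ wordSeg x (b+1) (m-b))) ?_ (by simp [hα])
  simp [hxa, List.append_assoc]

/-- star-right contradiction: `u'` in the class of `w_b`, with `δ ≠ []`. -/
lemma starR {m a b : ℕ} {x p q uu : ℕ → List A} {α β γ δ u' : List A}
    (hconn : ∀ w w' : List A, Sim σ ρ w w' → EqRel (PiRel σ ρ) w w')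
    (hc : ∀ i, 1 < i → i ≤ m → Sim σ ρ (p i ++ x i ++ q i) (q (i-1) ++ uu i))
    (hd : ∀ i, 1 ≤ i → i < m → q i = [] ∨ p (i+1) = [])
    (hqm : q m = [])
    (hsf : SFRel (PiRel σ ρ) (wordSeg x 1 m))
    (ha1 : 1 ≤ a) (hab : a < b) (hbm : b ≤ m)
    (hxa : x a = α ++ β) (hxb : x b = γ ++ δ)
    (hu' : u' = β ++ wordSeg x (a+1) (b-1-a) ++ γ)
    (hUWb : Sim σ ρ u' (p b ++ x b ++ q b)) (hδ : δ ≠ []) : False := by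
  obtain ⟨s₁, hpost⟩ := post_lemma hconn hc hd hqm b (by omega) hbm
  have hstep1 : EqRel (PiRel σ ρ) (wordSeg x 1 m)
      ((wordSeg x 1 (a-1) ++ α ++ u' ++ δ) ++ (q b ++ s₁)) := by
    refine eqrel_congr (wordSeg x 1 (a-1) ++ α ++ u' ++ δ) [] hpost ?_ ?_
    · rw [exposeU ha1 hab hbm hxa hxb hu']; simp [List.append_assoc]
    · simp [List.append_assoc]
  have hstep2 : EqRel (PiRel σ ρ) (wordSeg x 1 m)
      ((wordSeg x 1 (a-1) ++ α) ++ ((p b ++ x b ++ q b) ++ (δ ++ (q b ++ s₁)))) := by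
    refine hstep1.trans (eqrel_congr (wordSeg x 1 (a-1) ++ α) (δ ++ (q b ++ s₁))
      (hconn _ _ hUWb) (by simp [List.append_assoc]) (by simp [List.append_assoc]))
  refine no_square hsf hstep2 (wordSeg x 1 (a-1) ++ α ++ p b ++ γ) (δ ++ q b) s₁ ?_
    (by simp [hδ])
  simp [hxb, List.append_assoc]

end Contradictions

section Ctr

variable {σ ρ : List A → List A → Prop}

/-- left-bad contradiction. -/
lemma ctrL {m a b : ℕ} {x p q uu vv : ℕ → List A} {α β γ δ u' : List A}
    (hconn : ∀ w w' : List A, Sim σ ρ w w' → EqRel (PiRel σ ρ) w w')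
    (hc : ∀ i, 1 < i → i ≤ m → Sim σ ρ (p i ++ x i ++ q i) (q (i-1) ++ uu i))
    (hv : ∀ i, 1 ≤ i → i < m → Sim σ ρ (p i ++ x i ++ q i) (vv i ++ p (i+1)))
    (hd : ∀ i, 1 ≤ i → i < m → q i = [] ∨ p (i+1) = [])
    (hp1 : p 1 = []) (hqm : q m = [])
    (hsf : SFRel (PiRel σ ρ) (wordSeg x 1 m))
    (ha1 : 1 ≤ a) (hab : a < b) (hbm : b ≤ m)
    (hxa : x a = α ++ β) (hxb : x b = γ ++ δ) (hβ : β ≠ [])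
    (hu' : u' = β ++ wordSeg x (a+1) (b-1-a) ++ γ)
    (hsimu : Sim σ ρ u' u')
    (hqa : q a ≠ [])
    (hextra : α ≠ [] ∨ ¬ Sim σ ρ u' (p a ++ x a ++ q a)) : False := by
  have hpa1 : p (a+1) = [] := (hd a ha1 (by omega)).resolve_left hqa
  obtain ⟨w₁, hpre⟩ := pre_lemma hconn hv hd hp1 a ha1 (by omega)
  obtain ⟨s₁, hpost⟩ := post_lemma hconn hc hd hqm (a+1) (by omega) (by omega)
  -- exposure
  have hstep1 : EqRel (PiRel σ ρ) (wordSeg x 1 m)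
      ((w₁ ++ p a) ++ (x a ++ ((x (a+1) ++ q (a+1)) ++ s₁))) := by
    have h0 : EqRel (PiRel σ ρ) (wordSeg x 1 m)
        ((w₁ ++ p a) ++ (x a ++ (x (a+1) ++ wordSeg x (a+2) (m-(a+1))))) := by
      refine eqrel_congr [] (x a ++ (x (a+1) ++ wordSeg x (a+2) (m-(a+1))))
        hpre ?_ (by simp [List.append_assoc])
      rw [wordSeg_split_adj ha1 (by omega)]; simp [List.append_assoc]
    refine h0.trans (eqrel_congr (w₁ ++ p a ++ x a ++ x (a+1)) [] hpost
      ?_ (by simp [List.append_assoc]))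
    rw [show (a+1)+1 = a+2 by omega]; simp [List.append_assoc]
  have hW : Sim σ ρ (x (a+1) ++ q (a+1)) (x (a+1) ++ q (a+1)) := by
    have := sim_self_left (hc (a+1) (by omega) (by omega))
    rwa [hpa1, List.nil_append] at this
  have hwa : Sim σ ρ (p a ++ x a ++ q a) (p a ++ x a ++ q a) :=
    sim_self_left (hv a ha1 (by omega))
  rcases sim_three hsimu hwa hW with hUW | hWaW | hUWa
  · -- replace W by u' : square β β
    have hstep2 : EqRel (PiRel σ ρ) (wordSeg x 1 m)
        ((w₁ ++ p a ++ x a) ++ (u' ++ s₁)) := by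
      refine hstep1.trans (eqrel_congr (w₁ ++ p a ++ x a) s₁
        (hconn _ _ (sim_symm hUW)) (by simp [List.append_assoc]) (by simp [List.append_assoc]))
    refine no_square hsf hstep2 (w₁ ++ p a ++ α) β
      (wordSeg x (a+1) (b-1-a) ++ γ ++ s₁) ?_ hβ
    simp [hxa, hu', List.append_assoc]
  · -- replace W by w_a : square (p a ++ x a)
    have hstep2 : EqRel (PiRel σ ρ) (wordSeg x 1 m)
        ((w₁ ++ p a ++ x a) ++ ((p a ++ x a ++ q a) ++ s₁)) := by
      refine hstep1.trans (eqrel_congr (w₁ ++ p a ++ x a) s₁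
        (hconn _ _ (sim_symm hWaW)) (by simp [List.append_assoc]) (by simp [List.append_assoc]))
    refine no_square hsf hstep2 w₁ (p a ++ x a) (q a ++ s₁) ?_
      (by simp [hxa, hβ])
    simp [List.append_assoc]
  · rcases hextra with hα | hnsim
    · exact starL hconn hv hd hp1 hsf ha1 hab hbm hxa hxb hu' hUWa hα
    · exact hnsim hUWa

/-- right-bad contradiction. -/
lemma ctrR {m a b : ℕ} {x p q uu vv : ℕ → List A} {α β γ δ u' : List A}
    (hconn : ∀ w w' : List A, Sim σ ρ w w' → EqRel (PiRel σ ρ) w w')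
    (hc : ∀ i, 1 < i → i ≤ m → Sim σ ρ (p i ++ x i ++ q i) (q (i-1) ++ uu i))
    (hv : ∀ i, 1 ≤ i → i < m → Sim σ ρ (p i ++ x i ++ q i) (vv i ++ p (i+1)))
    (hd : ∀ i, 1 ≤ i → i < m → q i = [] ∨ p (i+1) = [])
    (hp1 : p 1 = []) (hqm : q m = [])
    (hsf : SFRel (PiRel σ ρ) (wordSeg x 1 m))
    (ha1 : 1 ≤ a) (hab : a < b) (hbm : b ≤ m)
    (hxa : x a = α ++ β) (hxb : x b = γ ++ δ) (hγ : γ ≠ [])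
    (hu' : u' = β ++ wordSeg x (a+1) (b-1-a) ++ γ)
    (hsimu : Sim σ ρ u' u')
    (hpb : p b ≠ [])
    (hextra : δ ≠ [] ∨ ¬ Sim σ ρ u' (p b ++ x b ++ q b)) : False := by
  have hqb1 : q (b-1) = [] := by
    have := hd (b-1) (by omega) (by omega)
    rw [show b-1+1 = b by omega] at this
    exact this.resolve_right hpb
  obtain ⟨w₁, hpre⟩ := pre_lemma hconn hv hd hp1 (b-1) (by omega) (by omega)
  obtain ⟨s₁, hpost⟩ := post_lemma hconn hc hd hqm b (by omega) hbm
  have hstep1 : EqRel (PiRel σ ρ) (wordSeg x 1 m)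
      (w₁ ++ ((p (b-1) ++ x (b-1)) ++ (x b ++ (q b ++ s₁)))) := by
    have h0 : EqRel (PiRel σ ρ) (wordSeg x 1 m)
        ((w₁ ++ p (b-1)) ++ (x (b-1) ++ (x b ++ wordSeg x (b+1) (m-b)))) := by
      refine eqrel_congr [] (x (b-1) ++ (x b ++ wordSeg x (b+1) (m-b)))
        hpre ?_ (by simp [List.append_assoc])
      have := wordSeg_split_adj (x := x) (k := b-1) (m := m) (by omega) (by omega)
      rw [show b-1+1 = b by omega, show b-1+2 = b+1 by omega] at this
      rw [this]; simp [List.append_assoc]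
    refine h0.trans (eqrel_congr (w₁ ++ p (b-1) ++ x (b-1) ++ x b) [] hpost
      ?_ (by simp [List.append_assoc]))
    simp [List.append_assoc]
  have hW : Sim σ ρ (p (b-1) ++ x (b-1)) (p (b-1) ++ x (b-1)) := by
    have := sim_self_left (hv (b-1) (by omega) (by omega))
    rwa [hqb1, List.append_nil] at this
  have hwb : Sim σ ρ (p b ++ x b ++ q b) (p b ++ x b ++ q b) :=
    sim_self_left (hc b (by omega) hbm)
  rcases sim_three hsimu hwb hW with hUW | hWbW | hUWb
  · -- replace W by u' : square γ γ
    have hstep2 : EqRel (PiRel σ ρ) (wordSeg x 1 m)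
        (w₁ ++ (u' ++ (x b ++ (q b ++ s₁)))) := by
      refine hstep1.trans (eqrel_congr w₁ (x b ++ (q b ++ s₁))
        (hconn _ _ (sim_symm hUW)) (by simp [List.append_assoc]) (by simp [List.append_assoc]))
    refine no_square hsf hstep2 (w₁ ++ β ++ wordSeg x (a+1) (b-1-a)) γ
      (δ ++ (q b ++ s₁)) ?_ hγ
    simp [hxb, hu', List.append_assoc]
  · -- replace W by w_b : square (x b ++ q b)
    have hstep2 : EqRel (PiRel σ ρ) (wordSeg x 1 m)
        (w₁ ++ ((p b ++ x b ++ q b) ++ (x b ++ (q b ++ s₁)))) := by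
      refine hstep1.trans (eqrel_congr w₁ (x b ++ (q b ++ s₁))
        (hconn _ _ (sim_symm hWbW)) (by simp [List.append_assoc]) (by simp [List.append_assoc]))
    refine no_square hsf hstep2 (w₁ ++ p b) (x b ++ q b) s₁ ?_
      (by simp [hxb, hγ])
    simp [List.append_assoc]
  · rcases hextra with hδ | hnsim
    · exact starR hconn hc hd hqm hsf ha1 hab hbm hxa hxb hu' hUWb hδ
    · exact hnsim hUWb

/-- middle contradiction: adjacent blocks with `q a = []`, `p b = []`,
`α ≠ []`, `δ ≠ []`. -/
lemma ctrM {m a b : ℕ} {x p q uu vv : ℕ → List A} {α β γ δ u' : List A}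
    (hconn : ∀ w w' : List A, Sim σ ρ w w' → EqRel (PiRel σ ρ) w w')
    (hc : ∀ i, 1 < i → i ≤ m → Sim σ ρ (p i ++ x i ++ q i) (q (i-1) ++ uu i))
    (hv : ∀ i, 1 ≤ i → i < m → Sim σ ρ (p i ++ x i ++ q i) (vv i ++ p (i+1)))
    (hd : ∀ i, 1 ≤ i → i < m → q i = [] ∨ p (i+1) = [])
    (hp1 : p 1 = []) (hqm : q m = [])
    (hsf : SFRel (PiRel σ ρ) (wordSeg x 1 m))
    (ha1 : 1 ≤ a) (hab : a < b) (hbm : b ≤ m)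
    (hxa : x a = α ++ β) (hxb : x b = γ ++ δ) (hβ : β ≠ []) (hγ : γ ≠ [])
    (hu' : u' = β ++ wordSeg x (a+1) (b-1-a) ++ γ)
    (hsimu : Sim σ ρ u' u')
    (hba : b = a + 1) (hqa : q a = []) (hpb : p b = [])
    (hα : α ≠ []) (hδ : δ ≠ []) : False := by
  obtain ⟨w₁, hpre⟩ := pre_lemma hconn hv hd hp1 a ha1 (by omega)
  obtain ⟨s₁, hpost⟩ := post_lemma hconn hc hd hqm b (by omega) hbm
  have hstep1 : EqRel (PiRel σ ρ) (wordSeg x 1 m)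
      (w₁ ++ ((p a ++ x a) ++ (x b ++ (q b ++ s₁)))) := by
    have h0 : EqRel (PiRel σ ρ) (wordSeg x 1 m)
        ((w₁ ++ p a) ++ (x a ++ (x b ++ wordSeg x (b+1) (m-b)))) := by
      refine eqrel_congr [] (x a ++ (x b ++ wordSeg x (b+1) (m-b)))
        hpre ?_ (by simp [List.append_assoc])
      have := wordSeg_split_adj (x := x) (k := a) (m := m) ha1 (by omega)
      rw [show a+1 = b by omega, show a+2 = b+1 by omega] at this
      rw [this]; simp [List.append_assoc]
    refine h0.trans (eqrel_congr (w₁ ++ p a ++ x a ++ x b) [] hpost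
      ?_ (by simp [List.append_assoc]))
    simp [List.append_assoc]
  have hwa : Sim σ ρ (p a ++ x a) (p a ++ x a) := by
    have := sim_self_left (hv a ha1 (by omega))
    rwa [hqa, List.append_nil] at this
  have hwb : Sim σ ρ (x b ++ q b) (x b ++ q b) := by
    have := sim_self_left (hc b (by omega) hbm)
    rwa [hpb, List.nil_append] at this
  rcases sim_three hsimu hwa hwb with hUWb' | hWaWb | hUWa'
  · -- Sim u' (x b ++ q b) : starR wants Sim u' (p b ++ x b ++ q b)
    refine starR hconn hc hd hqm hsf ha1 hab hbm hxa hxb hu' ?_ hδ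
    rwa [hpb, List.nil_append]
  · -- replace (p a ++ x a) by w_b : square (x b ++ q b)
    have hstep2 : EqRel (PiRel σ ρ) (wordSeg x 1 m)
        (w₁ ++ ((x b ++ q b) ++ (x b ++ (q b ++ s₁)))) := by
      refine hstep1.trans (eqrel_congr w₁ (x b ++ (q b ++ s₁))
        (hconn _ _ hWaWb) (by simp [List.append_assoc]) (by simp [List.append_assoc]))
    refine no_square hsf hstep2 w₁ (x b ++ q b) s₁ ?_ (by simp [hxb, hγ])
    simp [List.append_assoc]
  · -- Sim u' (p a ++ x a) : starL wants Sim u' (p a ++ x a ++ q a)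
    refine starL hconn hv hd hp1 hsf ha1 hab hbm hxa hxb hu' ?_ hα
    rwa [hqa, List.append_nil]

end Ctr

section Assemble

variable {σ ρ : List A → List A → Prop}

lemma dtau_closed (hset : SettingHyps σ ρ) {w w' : List A}
    (h : w ∈ DTau σ ρ) (h2 : EqRel (PiRel σ ρ) w w') : w' ∈ DTau σ ρ := by
  rcases h with h | h
  · exact Or.inl (closureD_sigma_pi_closed hset h h2)
  · exact Or.inr (closureD_rho_pi_closed hset h h2)

lemma sim_self_mem {w : List A} (h : Sim σ ρ w w) : w ∈ DTau σ ρ := by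
  rcases h with ⟨h1, _⟩ | ⟨h1, _⟩
  · exact Or.inl h1
  · exact Or.inr h1

/-- Case `a = b`: replace inside a single block. -/
lemma assembleA {m a : ℕ} {x p q : ℕ → List A} {α δ u' v' : List A}
    (hset : SettingHyps σ ρ)
    (hconn : ∀ w w' : List A, Sim σ ρ w w' → EqRel (PiRel σ ρ) w w')
    (hdec : IsLinDecomp σ ρ m x p q)
    (ha1 : 1 ≤ a) (ham : a ≤ m)
    (hxa : x a = α ++ u' ++ δ)
    (hsim : Sim σ ρ u' v') (hv' : v' ≠ []) :
    IsLinDecomp σ ρ m (fun i => if i = a then α ++ v' ++ δ else x i) p q ∧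
      wordSeg (fun i => if i = a then α ++ v' ++ δ else x i) 1 m =
        wordSeg x 1 (a-1) ++ (α ++ v' ++ δ) ++ wordSeg x (a+1) (m-a) := by
  obtain ⟨hm1, hne, ⟨uu, vv, hcnd, hvnd⟩, hd, hp1, hqm, hdtau⟩ := hdec
  set x' : ℕ → List A := fun i => if i = a then α ++ v' ++ δ else x i with hx'
  have hkey : EqRel (PiRel σ ρ) (p a ++ x a ++ q a) (p a ++ x' a ++ q a) := by
    refine eqrel_congr (p a ++ α) (δ ++ q a) (hconn _ _ hsim) ?_ ?_
    · simp [hxa, List.append_assoc]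
    · simp [hx', List.append_assoc]
  constructor
  · refine ⟨hm1, ?_, ⟨uu, vv, ?_, ?_⟩, hd, hp1, hqm, ?_⟩
    · intro i h1 h2
      by_cases hia : i = a
      · simp [hx', hia, hv']
      · simpa [hx', hia] using hne i h1 h2
    · intro i h1 h2
      by_cases hia : i = a
      · subst hia
        exact sim_left_congr hset (hcnd i h1 h2) hkey
      · simpa [hx', hia] using hcnd i h1 h2
    · intro i h1 h2
      by_cases hia : i = a
      · subst hia
        exact sim_left_congr hset (hvnd i h1 h2) hkey
      · simpa [hx', hia] using hvnd i h1 h2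
    · intro hm1'
      have h1 : x 1 ∈ DTau σ ρ := hdtau hm1'
      have ha' : a = 1 := by omega
      subst ha'
      have : EqRel (PiRel σ ρ) (x 1) (x' 1) := by
        refine eqrel_congr α δ (hconn _ _ hsim) (by simp [hxa, List.append_assoc])
          (by simp [hx', List.append_assoc])
      simpa [hx'] using dtau_closed hset h1 this
  · rw [wordSeg_split3 (x := x') ha1 ham]
    have e1 : wordSeg x' 1 (a-1) = wordSeg x 1 (a-1) :=
      wordSeg_congr _ (fun k hk => by simp [hx']; intro h; omega)
    have e2 : wordSeg x' (a+1) (m-a) = wordSeg x (a+1) (m-a) :=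
      wordSeg_congr _ (fun k hk => by simp [hx']; intro h; omega)
    rw [e1, e2]
    simp [hx']

end Assemble

section AssembleB

variable {σ ρ : List A → List A → Prop}

set_option maxHeartbeats 1000000 in
/-- Case `a < b`: blocks `α`, `v'`, `δ` replace blocks `a..b`. -/
lemma assembleB {m a b nα nδ : ℕ} {x p q uu vv : ℕ → List A} {α β γ δ v' : List A}
    (hne : ∀ i, 1 ≤ i → i ≤ m → x i ≠ [])
    (hcnd : ∀ i, 1 < i → i ≤ m → Sim σ ρ (p i ++ x i ++ q i) (q (i-1) ++ uu i))
    (hvnd : ∀ i, 1 ≤ i → i < m → Sim σ ρ (p i ++ x i ++ q i) (vv i ++ p (i+1)))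
    (hd : ∀ i, 1 ≤ i → i < m → q i = [] ∨ p (i+1) = [])
    (hp1 : p 1 = []) (hqm : q m = [])
    (ha1 : 1 ≤ a) (hab : a < b) (hbm : b ≤ m)
    (hxa : x a = α ++ β) (hxb : x b = γ ++ δ)
    (hsimv : Sim σ ρ v' v') (hv' : v' ≠ [])
    (hnα : (α = [] ∧ nα = 0) ∨ (α ≠ [] ∧ nα = 1))
    (hnδ : (δ = [] ∧ nδ = 0) ∨ (δ ≠ [] ∧ nδ = 1))
    (hJLα : α ≠ [] → ∃ t, Sim σ ρ v' ((β ++ q a) ++ t))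
    (hJLe : α = [] → 2 ≤ a → ∃ t, Sim σ ρ v' (q (a-1) ++ t))
    (hJRδ : δ ≠ [] → ∃ t, Sim σ ρ v' (t ++ (p b ++ γ)))
    (hJRe : δ = [] → b < m → ∃ t, Sim σ ρ v' (t ++ p (b+1)))
    (hcnt : a + nα + nδ ≤ b) :
    ∃ m' x' p' q', 1 ≤ m' ∧ m' ≤ m ∧ IsLinDecomp σ ρ m' x' p' q' ∧
      wordSeg x' 1 m' = wordSeg x 1 (a-1) ++ α ++ v' ++ δ ++ wordSeg x (b+1) (m-b) := by
  have hna01 : nα = 0 ∨ nα = 1 := by rcases hnα with ⟨_, h⟩ | ⟨_, h⟩ <;> omega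
  have hnd01 : nδ = 0 ∨ nδ = 1 := by rcases hnδ with ⟨_, h⟩ | ⟨_, h⟩ <;> omega
  set K := a + nα with hK
  set T := K + nδ with hT
  set m' := T + (m - b) with hm'
  set x' : ℕ → List A := fun i =>
    if i < a then x i else if i < K then α else if i = K then v'
    else if i ≤ T then δ else x (i + b - T) with hx'
  set p' : ℕ → List A := fun i =>
    if i < a then p i else if i < K then p a else if i = K then []
    else if i ≤ T then p b ++ γ else p (i + b - T) with hp'
  set q' : ℕ → List A := fun i =>
    if i < a then q i else if i < K then β ++ q a else if i = K then []
    else if i ≤ T then q b else q (i + b - T) with hq'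
  -- witnesses for the v'-block junctions
  obtain ⟨tL, htL⟩ : ∃ t, K = 1 ∨ Sim σ ρ v' (q' (K-1) ++ t) := by
    rcases hnα with ⟨hα0, hn0⟩ | ⟨hα1, hn1⟩
    · rcases Nat.eq_or_lt_of_le ha1 with h1 | h1
      · exact ⟨[], Or.inl (by omega)⟩
      · obtain ⟨t, ht⟩ := hJLe hα0 (by omega)
        refine ⟨t, Or.inr ?_⟩
        have : q' (K-1) = q (a-1) := by
          simp only [hq']
          rw [if_pos (show K - 1 < a by omega)]
          congr 1
          omega
        rwa [this]
    · obtain ⟨t, ht⟩ := hJLα hα1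
      refine ⟨t, Or.inr ?_⟩
      have : q' (K-1) = β ++ q a := by
        simp only [hq']
        rw [if_neg (show ¬ K - 1 < a by omega), if_pos (show K - 1 < K by omega)]
      rwa [this]
  obtain ⟨tR, htR⟩ : ∃ t, (nδ = 0 ∧ b = m) ∨ Sim σ ρ v' (t ++ p' (K+1)) := by
    rcases hnδ with ⟨hδ0, hn0⟩ | ⟨hδ1, hn1⟩
    · rcases Nat.eq_or_lt_of_le hbm with h1 | h1
      · exact ⟨[], Or.inl (by omega)⟩
      · obtain ⟨t, ht⟩ := hJRe hδ0 h1
        refine ⟨t, Or.inr ?_⟩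
        have : p' (K+1) = p (b+1) := by
          simp only [hp']
          rw [if_neg (show ¬ K + 1 < a by omega), if_neg (show ¬ K + 1 < K by omega),
            if_neg (show ¬ K + 1 = K by omega), if_neg (show ¬ K + 1 ≤ T by omega)]
          congr 1
          omega
        rwa [this]
    · obtain ⟨t, ht⟩ := hJRδ hδ1
      refine ⟨t, Or.inr ?_⟩
      have : p' (K+1) = p b ++ γ := by
        simp only [hp']
        rw [if_neg (show ¬ K + 1 < a by omega), if_neg (show ¬ K + 1 < K by omega),
          if_neg (show ¬ K + 1 = K by omega), if_pos (show K + 1 ≤ T by omega)]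
      rwa [this]
  set uu' : ℕ → List A := fun i =>
    if i < a then uu i else if i < K then uu a else if i = K then tL
    else if i ≤ T then q (b-1) ++ uu b
    else if i = T+1 then (if nδ = 0 then q b ++ uu (b+1) else uu (b+1))
    else uu (i + b - T) with huu'
  set vv' : ℕ → List A := fun i =>
    if i + 1 < a then vv i
    else if i + 1 = a then (if nα = 1 then vv (a-1) else vv (a-1) ++ p a)
    else if i < K then vv a ++ p (a+1) else if i = K then tR
    else if i ≤ T then vv b else vv (i + b - T) with hvv'
  -- region evaluation
  have evlt : ∀ i, i < a → x' i = x i ∧ p' i = p i ∧ q' i = q i := by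
    intro i h
    refine ⟨?_, ?_, ?_⟩ <;> simp only [hx', hp', hq'] <;> rw [if_pos h]
  have evα : nα = 1 → x' a = α ∧ p' a = p a ∧ q' a = β ++ q a := by
    intro h
    refine ⟨?_, ?_, ?_⟩ <;> simp only [hx', hp', hq'] <;>
      rw [if_neg (show ¬ a < a by omega), if_pos (show a < K by omega)]
  have evK : x' K = v' ∧ p' K = [] ∧ q' K = [] := by
    refine ⟨?_, ?_, ?_⟩
    all_goals simp only [hx', hp', hq']
    all_goals rw [if_neg (show ¬ K < a by omega), if_neg (show ¬ K < K by omega)]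
    all_goals simp
  have evδ : nδ = 1 → x' (K+1) = δ ∧ p' (K+1) = p b ++ γ ∧ q' (K+1) = q b := by
    intro h
    refine ⟨?_, ?_, ?_⟩ <;> simp only [hx', hp', hq'] <;>
      rw [if_neg (show ¬ K + 1 < a by omega), if_neg (show ¬ K + 1 < K by omega),
        if_neg (show ¬ K + 1 = K by omega), if_pos (show K + 1 ≤ T by omega)]
  have evt : ∀ i, T + 1 ≤ i → x' i = x (i + b - T) ∧ p' i = p (i + b - T) ∧
      q' i = q (i + b - T) := by
    intro i h
    refine ⟨?_, ?_, ?_⟩ <;> simp only [hx', hp', hq'] <;>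
      rw [if_neg (show ¬ i < a by omega), if_neg (show ¬ i < K by omega),
        if_neg (show ¬ i = K by omega), if_neg (show ¬ i ≤ T by omega)]
  refine ⟨m', x', p', q', by omega, by omega, ⟨by omega, ?_, ⟨uu', vv', ?_, ?_⟩, ?_, ?_, ?_, ?_⟩, ?_⟩
  · -- nonempty blocks
    intro i h1 h2
    by_cases c1 : i < a
    · rw [(evlt i c1).1]; exact hne i h1 (by omega)
    by_cases c2 : i < K
    · have hn1 : nα = 1 := by omega
      have hia : i = a := by omega
      rw [hia, (evα hn1).1]
      exact (hnα.resolve_left (by omega)).1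
    by_cases c3 : i = K
    · rw [c3, evK.1]; exact hv'
    by_cases c4 : i ≤ T
    · have hn1 : nδ = 1 := by omega
      have hik : i = K + 1 := by omega
      rw [hik, (evδ hn1).1]
      exact (hnδ.resolve_left (by omega)).1
    · rw [(evt i (by omega)).1]
      exact hne _ (by omega) (by omega)
  · -- (c) conditions
    intro i h1 h2
    by_cases c1 : i < a
    · obtain ⟨e1, e2, e3⟩ := evlt i c1
      obtain ⟨f1, f2, f3⟩ := evlt (i-1) (by omega)
      have euu : uu' i = uu i := by simp only [huu']; rw [if_pos c1]
      rw [e1, e2, e3, f3, euu]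
      exact hcnd i h1 (by omega)
    by_cases c2 : i < K
    · have hn1 : nα = 1 := by omega
      have hia : i = a := by omega
      subst hia
      obtain ⟨e1, e2, e3⟩ := evα hn1
      obtain ⟨f1, f2, f3⟩ := evlt (i-1) (by omega)
      have euu : uu' i = uu i := by
        simp only [huu']; rw [if_neg (show ¬ i < i by omega), if_pos (show i < K by omega)]
      rw [e1, e2, e3, f3, euu]
      have := hcnd i h1 (by omega)
      rw [hxa] at this
      have heq : p i ++ α ++ (β ++ q i) = p i ++ (α ++ β) ++ q i := by
        simp [List.append_assoc]
      rwa [heq]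
    by_cases c3 : i = K
    · subst c3
      obtain ⟨e1, e2, e3⟩ := evK
      have euu : uu' K = tL := by
        simp only [huu']
        rw [if_neg (show ¬ K < a by omega), if_neg (show ¬ K < K by omega)]
        simp
      rw [e1, e2, e3, euu]
      have hsim := htL.resolve_left (by omega)
      simpa using hsim
    by_cases c4 : i ≤ T
    · have hn1 : nδ = 1 := by omega
      have hik : i = K + 1 := by omega
      subst hik
      obtain ⟨e1, e2, e3⟩ := evδ hn1
      have f3 : q' (K+1-1) = [] := by rw [show K+1-1 = K by omega]; exact evK.2.2
      have euu : uu' (K+1) = q (b-1) ++ uu b := by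
        simp only [huu']
        rw [if_neg (show ¬ K+1 < a by omega), if_neg (show ¬ K+1 < K by omega),
          if_neg (show ¬ K+1 = K by omega), if_pos (show K+1 ≤ T by omega)]
      rw [e1, e2, e3, f3, euu]
      have := hcnd b (by omega) hbm
      rw [hxb] at this
      have heq : p b ++ γ ++ δ ++ q b = p b ++ (γ ++ δ) ++ q b := by
        simp [List.append_assoc]
      rw [List.nil_append, heq]
      exact this
    by_cases c5 : i = T + 1
    · subst c5
      obtain ⟨e1, e2, e3⟩ := evt (T+1) (by omega)
      have harith : T + 1 + b - T = b + 1 := by omega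
      rw [e1, e2, e3, harith]
      have hbm' : b + 1 ≤ m := by omega
      have hmain := hcnd (b+1) (by omega) hbm'
      rw [show b+1-1 = b by omega] at hmain
      rcases hnd01 with hn0 | hn1
      · have f3 : q' (T+1-1) = [] := by
          rw [show T+1-1 = K by omega]; exact evK.2.2
        have euu : uu' (T+1) = q b ++ uu (b+1) := by
          simp only [huu']
          rw [if_neg (show ¬ T+1 < a by omega), if_neg (show ¬ T+1 < K by omega),
            if_neg (show ¬ T+1 = K by omega), if_neg (show ¬ T+1 ≤ T by omega)]
          simp [hn0]
        rw [f3, euu, List.nil_append]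
        exact hmain
      · have f3 : q' (T+1-1) = q b := by
          rw [show T+1-1 = K+1 by omega]; exact (evδ hn1).2.2
        have euu : uu' (T+1) = uu (b+1) := by
          simp only [huu']
          rw [if_neg (show ¬ T+1 < a by omega), if_neg (show ¬ T+1 < K by omega),
            if_neg (show ¬ T+1 = K by omega), if_neg (show ¬ T+1 ≤ T by omega)]
          simp [show ¬ nδ = 0 by omega]
        rw [f3, euu]
        exact hmain
    · -- deep tail
      obtain ⟨e1, e2, e3⟩ := evt i (by omega)
      obtain ⟨f1, f2, f3⟩ := evt (i-1) (by omega)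
      have euu : uu' i = uu (i + b - T) := by
        simp only [huu']
        rw [if_neg (show ¬ i < a by omega), if_neg (show ¬ i < K by omega),
          if_neg (show ¬ i = K by omega), if_neg (show ¬ i ≤ T by omega),
          if_neg (show ¬ i = T+1 by omega)]
      rw [e1, e2, e3, f3, euu, show i - 1 + b - T = i + b - T - 1 by omega]
      exact hcnd (i + b - T) (by omega) (by omega)
  · -- (v) conditions
    intro i h1 h2
    by_cases c1 : i + 1 < a
    · obtain ⟨e1, e2, e3⟩ := evlt i (by omega)
      obtain ⟨f1, f2, f3⟩ := evlt (i+1) c1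
      have evv : vv' i = vv i := by simp only [hvv']; rw [if_pos c1]
      rw [e1, e2, e3, f2, evv]
      exact hvnd i h1 (by omega)
    by_cases c2 : i + 1 = a
    · obtain ⟨e1, e2, e3⟩ := evlt i (by omega)
      rw [e1, e2, e3]
      have hmain := hvnd i h1 (by omega)
      rw [c2] at hmain
      rcases hna01 with hn0 | hn1
      · have f2 : p' (i+1) = [] := by rw [c2, show a = K by omega]; exact evK.2.1
        have evv : vv' i = vv (a-1) ++ p a := by
          simp only [hvv']
          rw [if_neg c1, if_pos c2, if_neg (show ¬ nα = 1 by omega)]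
        rw [f2, evv, show a - 1 = i by omega]
        simpa using hmain
      · have f2 : p' (i+1) = p a := by rw [c2]; exact (evα hn1).2.1
        have evv : vv' i = vv (a-1) := by
          simp only [hvv']
          rw [if_neg c1, if_pos c2, if_pos hn1]
        rw [f2, evv, show a - 1 = i by omega]
        exact hmain
    by_cases c3 : i < K
    · have hn1 : nα = 1 := by omega
      have hia : i = a := by omega
      subst hia
      obtain ⟨e1, e2, e3⟩ := evα hn1
      have f2 : p' (i+1) = [] := by rw [show i+1 = K by omega]; exact evK.2.1
      have evv : vv' i = vv i ++ p (i+1) := by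
        simp only [hvv']
        rw [if_neg c1, if_neg c2, if_pos c3]
      rw [e1, e2, e3, f2, evv]
      have hmain := hvnd i h1 (by omega)
      rw [hxa] at hmain
      have heq : p i ++ α ++ (β ++ q i) = p i ++ (α ++ β) ++ q i := by
        simp [List.append_assoc]
      rw [heq]
      simpa using hmain
    by_cases c4 : i = K
    · subst c4
      obtain ⟨e1, e2, e3⟩ := evK
      have evv : vv' K = tR := by
        simp only [hvv']
        rw [if_neg c1, if_neg c2, if_neg (show ¬ K < K by omega)]
        simp
      rw [e1, e2, e3, evv]
      have hsim : Sim σ ρ v' (tR ++ p' (K+1)) := by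
        rcases htR with ⟨hh1, hh2⟩ | hh
        · omega
        · exact hh
      simpa using hsim
    by_cases c5 : i ≤ T
    · have hn1 : nδ = 1 := by omega
      have hik : i = K + 1 := by omega
      subst hik
      obtain ⟨e1, e2, e3⟩ := evδ hn1
      have f2 : p' (K+1+1) = p (b+1) := by
        obtain ⟨g1, g2, g3⟩ := evt (K+1+1) (by omega)
        rw [g2, show K+1+1+b-T = b+1 by omega]
      have evv : vv' (K+1) = vv b := by
        simp only [hvv']
        rw [if_neg c1, if_neg c2, if_neg (show ¬ K+1 < K by omega),
          if_neg (show ¬ K+1 = K by omega), if_pos (show K+1 ≤ T by omega)]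
      rw [e1, e2, e3, f2, evv]
      have hmain := hvnd b (by omega) (by omega)
      rw [hxb] at hmain
      have heq : p b ++ γ ++ δ ++ q b = p b ++ (γ ++ δ) ++ q b := by
        simp [List.append_assoc]
      rw [heq]
      exact hmain
    · obtain ⟨e1, e2, e3⟩ := evt i (by omega)
      obtain ⟨f1, f2, f3⟩ := evt (i+1) (by omega)
      have evv : vv' i = vv (i + b - T) := by
        simp only [hvv']
        rw [if_neg c1, if_neg c2, if_neg (show ¬ i < K by omega),
          if_neg (show ¬ i = K by omega), if_neg c5]
      rw [e1, e2, e3, f2, evv, show i + 1 + b - T = i + b - T + 1 by omega]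
      exact hvnd (i + b - T) (by omega) (by omega)
  · -- (d) conditions
    intro i h1 h2
    by_cases c1 : i + 1 < a
    · rw [(evlt i (by omega)).2.2, (evlt (i+1) c1).2.1]
      exact hd i h1 (by omega)
    by_cases c2 : i + 1 = a
    · rcases hna01 with hn0 | hn1
      · exact Or.inr (by rw [c2, show a = K by omega]; exact evK.2.1)
      · rw [(evlt i (by omega)).2.2, c2, (evα hn1).2.1]
        have := hd i h1 (by omega)
        rwa [c2] at this
    by_cases c3 : i < K
    · exact Or.inr (by rw [show i+1 = K by omega]; exact evK.2.1)
    by_cases c4 : i = K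
    · exact Or.inl (by rw [c4]; exact evK.2.2)
    by_cases c5 : i ≤ T
    · have hn1 : nδ = 1 := by omega
      have hik : i = K + 1 := by omega
      rw [hik, (evδ hn1).2.2]
      have f2 : p' (K+1+1) = p (b+1) := by
        obtain ⟨g1, g2, g3⟩ := evt (K+1+1) (by omega)
        rw [g2, show K+1+1+b-T = b+1 by omega]
      rw [f2]
      exact hd b (by omega) (by omega)
    · rw [(evt i (by omega)).2.2, (evt (i+1) (by omega)).2.1,
        show i + 1 + b - T = i + b - T + 1 by omega]
      exact hd (i + b - T) (by omega) (by omega)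
  · -- p' 1 = []
    by_cases c1 : 1 < a
    · rw [(evlt 1 c1).2.1]; exact hp1
    · have ha' : a = 1 := by omega
      rcases hna01 with hn0 | hn1
      · rw [show (1:ℕ) = K by omega]; exact evK.2.1
      · rw [show (1:ℕ) = a by omega, (evα hn1).2.1, ha']; exact hp1
  · -- q' m' = []
    rcases Nat.eq_or_lt_of_le hbm with hb1 | hb1
    · rcases hnd01 with hn0 | hn1
      · rw [show m' = K by omega]; exact evK.2.2
      · rw [show m' = K + 1 by omega, (evδ hn1).2.2, hb1]; exact hqm
    · rw [(evt m' (by omega)).2.2, show m' + b - T = m by omega]; exact hqm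
  · -- m' = 1 → DTau
    intro hm1'
    have h1 : a = 1 ∧ nα = 0 ∧ K = 1 := by omega
    rw [show (1:ℕ) = K by omega, evK.1]
    exact sim_self_mem hsimv
  · -- word equality
    have s1 := wordSeg_append (x := x') 1 (a-1) (nα + (1 + (nδ + (m-b))))
    rw [show (a-1) + (nα + (1 + (nδ + (m-b)))) = m' by omega,
      show 1 + (a-1) = a by omega] at s1
    have s2 := wordSeg_append (x := x') a nα (1 + (nδ + (m-b)))
    have s3 := wordSeg_append (x := x') K 1 (nδ + (m-b))
    have s4 := wordSeg_append (x := x') (K+1) nδ (m-b)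
    rw [wordSeg_one] at s3
    have E1 : wordSeg x' 1 (a-1) = wordSeg x 1 (a-1) :=
      wordSeg_congr _ (fun k hk => (evlt (1+k) (by omega)).1)
    have E2 : wordSeg x' a nα = α := by
      rcases hna01 with hn0 | hn1
      · rw [hn0, wordSeg_zero, (hnα.resolve_right (by omega)).1]
      · rw [hn1, wordSeg_one, (evα hn1).1]
    have E3 : x' K = v' := evK.1
    have E4 : wordSeg x' (K+1) nδ = δ := by
      rcases hnd01 with hn0 | hn1
      · rw [hn0, wordSeg_zero, (hnδ.resolve_right (by omega)).1]
      · rw [hn1, wordSeg_one, (evδ hn1).1]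
    have E5 : wordSeg x' (K+1+nδ) (m-b) = wordSeg x (b+1) (m-b) :=
      wordSeg_congr _ (fun k hk => by
        rw [(evt (K+1+nδ+k) (by omega)).1, show K+1+nδ+k+b-T = b+1+k by omega])
    rw [s1, s2, s3, s4, E1, E2, E3, E4, E5]
    simp [List.append_assoc]

end AssembleB


set_option maxHeartbeats 1000000 in
/-- Lemma 5: if `x = y·u·z ∈ SF(A,π) ∩ Lin(n)` and `u ~ v`,
then `y·v·z ∈ Lin(n)`. -/
theorem linSet_closed_under_sim_replacement {A : Type*} {nu nv : ℕ}
    (u : Fin nu → List A) (v : Fin nv → List A)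
    (hu : Function.Injective u) (hv : Function.Injective v)
    (σ ρ : List A → List A → Prop) (hσ : σ = FamilyRel u) (hρ : ρ = FamilyRel v)
    (hset : SettingHyps σ ρ)
    (n : ℕ) (y z u' v' : List A)
    (hsf : SFRel (PiRel σ ρ) (y ++ u' ++ z))
    (hlin : y ++ u' ++ z ∈ LinSet σ ρ n)
    (hsim : Sim σ ρ u' v') :
    y ++ v' ++ z ∈ LinSet σ ρ n := by
  classical
  have hconn : ∀ w w' : List A, Sim σ ρ w w' → EqRel (PiRel σ ρ) w w' :=
    fun w w' h => sim_conn hσ hρ h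
  obtain ⟨m, hm1, hmn, x, p, q, hdec, hXeq⟩ := hlin
  -- degenerate cases
  by_cases hu0 : u' = []
  · by_cases hv0 : v' = []
    · rw [hv0, ← hu0]
      exact ⟨m, hm1, hmn, x, p, q, hdec, hXeq⟩
    · exfalso
      have h1 : EqRel (PiRel σ ρ) u' v' := hconn _ _ hsim
      have e1 : EqRel (PiRel σ ρ) (y ++ u' ++ z) (y ++ v' ++ z) :=
        eqrel_congr y z h1 rfl rfl
      have e2 : EqRel (PiRel σ ρ) (y ++ v' ++ z) ((y ++ v') ++ v' ++ z) := by
        refine eqrel_congr (y ++ v') z (hu0 ▸ h1) ?_ rfl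
        simp
      exact no_square hsf (e1.trans e2) y v' z (by simp [List.append_assoc]) hv0
  by_cases hv0 : v' = []
  · exfalso
    have h1 : EqRel (PiRel σ ρ) v' u' := hconn _ _ (sim_symm hsim)
    have e2 : EqRel (PiRel σ ρ) (y ++ u' ++ z) (y ++ u' ++ (u' ++ z)) := by
      refine eqrel_congr y (u' ++ z) (hv0 ▸ h1) ?_ ?_
      · simp [List.append_assoc]
      · simp [List.append_assoc]
    exact no_square hsf e2 y u' z (by simp [List.append_assoc]) hu0
  -- main case
  have hdecC := hdec
  obtain ⟨hm1', hne, ⟨uu, vv, hcnd, hvnd⟩, hd, hp1, hqm, hdtau⟩ := hdecC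
  have hsimu : Sim σ ρ u' u' := sim_self_left hsim
  have hsimv : Sim σ ρ v' v' := sim_self_left (sim_symm hsim)
  have hsf' : SFRel (PiRel σ ρ) (wordSeg x 1 m) := by rwa [hXeq] at hsf
  have hX : wordSeg x 1 m = y ++ (u' ++ z) := by
    rw [← hXeq]; simp [List.append_assoc]
  obtain ⟨a, α, β', ha1', halm, hy, hxa', hβ', hw⟩ :=
    startSplit m 1 y (u' ++ z) hX
      (fun h => hu0 (List.append_eq_nil_iff.mp h).1)
      (fun i h1 h2 => hne i h1 (by omega))
  rw [show 1 + m - (a+1) = m - a by omega] at hw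
  have haM : a ≤ m := by omega
  set xt : ℕ → List A := fun i => if i = a then β' else x i with hxt
  have hxteq : ∀ i, i ≠ a → xt i = x i := fun i h => by simp only [hxt]; rw [if_neg h]
  have hxta : xt a = β' := by simp [hxt]
  have hwt : wordSeg xt a (m - a + 1) = u' ++ z := by
    rw [wordSeg_succ_left, hxta,
      wordSeg_congr (x := xt) (x' := x) (m - a) (fun k hk => hxteq (a+1+k) (by omega)), ← hw]
  obtain ⟨b, γ, δ, hab', hbm', hu'eq, hxbt, hγ, hz⟩ :=
    endSplit (m - a + 1) a u' z hwt hu0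
      (by intro i h1 h2
          by_cases hia : i = a
          · rw [hia, hxta]; exact hβ'
          · rw [hxteq i hia]; exact hne i (by omega) (by omega))
  have hbM : b ≤ m := by omega
  rw [show a + (m - a + 1) - (b+1) = m - b by omega] at hz
  have hz' : z = δ ++ wordSeg x (b+1) (m-b) := by
    rw [hz, wordSeg_congr (x := xt) (x' := x) (m - b) (fun k hk => hxteq (b+1+k) (by omega))]
  by_cases haeqb : a = b
  · -- case A : occurrence inside one block
    have hu'g : u' = γ := by
      rw [hu'eq, haeqb]; simp
    have hb'' : β' = u' ++ δ := by
      rw [hu'g, ← hxbt, ← haeqb, hxta]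
    have hxaA : x a = α ++ u' ++ δ := by
      rw [hxa', hb'']; simp [List.append_assoc]
    obtain ⟨hdecA, hwordA⟩ := assembleA hset hconn hdec ha1' haM hxaA hsim hv0
    refine ⟨m, hm1, hmn, _, p, q, hdecA, ?_⟩
    rw [hwordA, hy, hz', ← haeqb]
    simp [List.append_assoc]
  · -- case B : occurrence spans several blocks
    have hab : a < b := lt_of_le_of_ne hab' haeqb
    have hxb : x b = γ ++ δ := by rw [← hxbt, hxteq b (fun h => haeqb h.symm)]
    have hu' : u' = β' ++ wordSeg x (a+1) (b-1-a) ++ γ := by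
      rw [hu'eq, show b - a = (b - a - 1) + 1 by omega, wordSeg_succ_left, hxta,
        wordSeg_congr (x := xt) (x' := x) (b-a-1) (fun k hk => hxteq (a+1+k) (by omega)),
        show b - a - 1 = b - 1 - a by omega]
    -- left junction fact
    have hJLα : α ≠ [] → ∃ t, Sim σ ρ v' ((β' ++ q a) ++ t) := by
      intro hα
      by_cases hqa : q a = []
      · refine ⟨wordSeg x (a+1) (b-1-a) ++ γ, ?_⟩
        have h0 := sim_symm hsim
        rw [hu'] at h0
        have e : β' ++ wordSeg x (a+1) (b-1-a) ++ γ
            = (β' ++ q a) ++ (wordSeg x (a+1) (b-1-a) ++ γ) := by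
          simp [hqa, List.append_assoc]
        rwa [e] at h0
      · exact (ctrL hconn hcnd hvnd hd hp1 hqm hsf' ha1' hab hbM hxa' hxb hβ' hu'
          hsimu hqa (Or.inl hα)).elim
    have hJLe : α = [] → 2 ≤ a → ∃ t, Sim σ ρ v' (q (a-1) ++ t) := by
      intro hα ha2
      by_cases hqa1 : q (a-1) = []
      · exact ⟨v', by rw [hqa1]; simpa using hsimv⟩
      · have hpa : p a = [] := by
          have := hd (a-1) (by omega) (by omega)
          rw [show a-1+1 = a by omega] at this
          exact this.resolve_left hqa1
        have hxa0 : x a = β' := by simpa [hα] using hxa'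
        have huu : u' = wordSeg x a (b-a) ++ γ := by
          rw [hu', show b - a = (b-1-a)+1 by omega, wordSeg_succ_left, hxa0]
        rcases groundL_lemma hd (b-1-a) a ha1' (by omega) with hall | ⟨j, hj1, hj2, hj3, hj4⟩
        · -- all q nonempty on [a, b-1] : rescue or contradiction
          by_cases hsimUWa : Sim σ ρ u' (p a ++ x a ++ q a)
          · exact ⟨uu a, sim_trans hset hsim
              (sim_trans hset (sim_symm hsimUWa) (hcnd a (by omega) haM))⟩
          · exact (ctrL hconn hcnd hvnd hd hp1 hqm hsf' ha1' hab hbM hxa' hxb hβ' hu'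
              hsimu (hall a (le_refl _) (by omega)) (Or.inr hsimUWa)).elim
        · -- ground at j : chain rewriting
          obtain ⟨t₀, hseg⟩ := segL_lemma hconn hcnd (j - (a-1)) (a-1) (by omega)
            (by omega)
            (by rw [show (a-1) + (j - (a-1)) = j by omega]; exact hj3)
            (by intro k hk1 hk2
                rcases Nat.eq_or_lt_of_le hk1 with h' | h'
                · rw [← h', show a - 1 + 1 = a by omega]; exact hpa
                · exact hj4 k (by omega) (by omega))
          have hsplit : wordSeg x a (b-a)
              = wordSeg x a (j-(a-1)) ++ wordSeg x (j+1) (b-1-j) := by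
            have t1 := wordSeg_append (x := x) a (j-(a-1)) (b-1-j)
            rw [show (j-(a-1)) + (b-1-j) = b - a by omega,
              show a + (j-(a-1)) = j+1 by omega] at t1
            exact t1
          have hrew : EqRel (PiRel σ ρ) u'
              (q (a-1) ++ (t₀ ++ (wordSeg x (j+1) (b-1-j) ++ γ))) := by
            rw [show a - 1 + 1 = a by omega] at hseg
            refine eqrel_congr [] (wordSeg x (j+1) (b-1-j) ++ γ) hseg ?_ ?_
            · rw [huu, hsplit]; simp [List.append_assoc]
            · simp [List.append_assoc]
          exact ⟨_, sim_right_congr hset (sim_symm hsim) hrew⟩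
    -- right junction fact
    have hJRδ : δ ≠ [] → ∃ t, Sim σ ρ v' (t ++ (p b ++ γ)) := by
      intro hδ
      by_cases hpb : p b = []
      · refine ⟨β' ++ wordSeg x (a+1) (b-1-a), ?_⟩
        have h0 := sim_symm hsim
        rw [hu'] at h0
        have e : β' ++ wordSeg x (a+1) (b-1-a) ++ γ
            = (β' ++ wordSeg x (a+1) (b-1-a)) ++ (p b ++ γ) := by
          simp [hpb, List.append_assoc]
        rwa [e] at h0
      · exact (ctrR hconn hcnd hvnd hd hp1 hqm hsf' ha1' hab hbM hxa' hxb hγ hu'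
          hsimu hpb (Or.inl hδ)).elim
    have hJRe : δ = [] → b < m → ∃ t, Sim σ ρ v' (t ++ p (b+1)) := by
      intro hδ hbm'
      by_cases hqb : q b = []
      · -- chain / rescue analysis
        have hxb0 : x b = γ := by simpa [hδ] using hxb
        have huu : u' = β' ++ wordSeg x (a+1) (b-a) := by
          rw [hu', show b - a = (b-1-a)+1 by omega, wordSeg_succ_right,
            show a + 1 + (b-1-a) = b by omega, hxb0]
          simp [List.append_assoc]
        rcases groundR_lemma hd (b-(a+1)) (a+1) (by omega) (by omega)
          with hall | ⟨j, hj1, hj2, hj3, hj4⟩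
        · -- all p nonempty on [a+1, b] : rescue or contradiction
          by_cases hsimUWb : Sim σ ρ u' (p b ++ x b ++ q b)
          · exact ⟨vv b, sim_trans hset hsim
              (sim_trans hset (sim_symm hsimUWb) (hvnd b (by omega) hbm'))⟩
          · exact (ctrR hconn hcnd hvnd hd hp1 hqm hsf' ha1' hab hbM hxa' hxb hγ hu'
              hsimu (hall b (by omega) (by omega)) (Or.inr hsimUWb)).elim
        · -- ground at j : chain rewriting
          rw [show a + 1 + (b - (a+1)) = b by omega] at hj2 hj4
          obtain ⟨t₀, hseg⟩ := segR_lemma hconn hvnd (b+1-j) j (by omega) (by omega) hj3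
            (by intro k hk1 hk2
                rcases Nat.eq_or_lt_of_le (show k ≤ b by omega) with h' | h'
                · rw [h']; exact hqb
                · exact hj4 k hk1 (by omega))
          rw [show j + (b+1-j) = b+1 by omega] at hseg
          have hsplit : wordSeg x (a+1) (b-a)
              = wordSeg x (a+1) (j-(a+1)) ++ wordSeg x j (b+1-j) := by
            have t1 := wordSeg_append (x := x) (a+1) (j-(a+1)) (b+1-j)
            rw [show (j-(a+1)) + (b+1-j) = b - a by omega,
              show a + 1 + (j-(a+1)) = j by omega] at t1
            exact t1
          have hrew : EqRel (PiRel σ ρ) u'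
              ((β' ++ wordSeg x (a+1) (j-(a+1)) ++ t₀) ++ p (b+1)) := by
            refine eqrel_congr (β' ++ wordSeg x (a+1) (j-(a+1))) [] hseg ?_ ?_
            · rw [huu, hsplit]; simp [List.append_assoc]
            · simp [List.append_assoc]
          exact ⟨_, sim_right_congr hset (sim_symm hsim) hrew⟩
      · -- q b ≠ [] forces p (b+1) = []
        have hpb1 : p (b+1) = [] := (hd b (by omega) hbm').resolve_left hqb
        exact ⟨v', by rw [hpb1]; simpa using hsimv⟩
    -- block count
    obtain ⟨nα, hnα⟩ : ∃ k, (α = [] ∧ k = 0) ∨ (α ≠ [] ∧ k = 1) := by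
      by_cases hα : α = []
      · exact ⟨0, Or.inl ⟨hα, rfl⟩⟩
      · exact ⟨1, Or.inr ⟨hα, rfl⟩⟩
    obtain ⟨nδ, hnδ⟩ : ∃ k, (δ = [] ∧ k = 0) ∨ (δ ≠ [] ∧ k = 1) := by
      by_cases hδ : δ = []
      · exact ⟨0, Or.inl ⟨hδ, rfl⟩⟩
      · exact ⟨1, Or.inr ⟨hδ, rfl⟩⟩
    have hcnt : a + nα + nδ ≤ b := by
      rcases hnα with ⟨hα, hk⟩ | ⟨hα, hk⟩ <;> rcases hnδ with ⟨hδ, hk'⟩ | ⟨hδ, hk'⟩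
      · omega
      · omega
      · omega
      · -- both nonempty : need a + 2 ≤ b
        subst hk; subst hk'
        by_contra hno
        have hba : b = a + 1 := by omega
        by_cases hqa : q a = []
        · by_cases hpb : p b = []
          · exact ctrM hconn hcnd hvnd hd hp1 hqm hsf' ha1' hab hbM hxa' hxb hβ' hγ hu'
              hsimu hba hqa hpb hα hδ
          · exact ctrR hconn hcnd hvnd hd hp1 hqm hsf' ha1' hab hbM hxa' hxb hγ hu'
              hsimu hpb (Or.inl hδ)
        · exact ctrL hconn hcnd hvnd hd hp1 hqm hsf' ha1' hab hbM hxa' hxb hβ' hu'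
            hsimu hqa (Or.inl hα)
    obtain ⟨m', x', p', q', hm'1, hm'm, hdecB, hword⟩ :=
      assembleB hne hcnd hvnd hd hp1 hqm ha1' hab hbM hxa' hxb hsimv hv0 hnα hnδ
        hJLα hJLe hJRδ hJRe hcnt
    refine ⟨m', hm'1, by omega, x', p', q', hdecB, ?_⟩
    rw [hword, hy, hz']
    simp [List.append_assoc]
end SqFreePaper
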